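/- Let B > 0 and let f₀ = (1/(2B)) 𝟙_{(−B,B)} be the uniform density on (−B,B). Let θ₁, θ₂ : ℝ → ℝ be continuous, nonnegative, and even with θᵢ(r) = 0 whenever |r| ≥ B (i = 1, 2). If μ_{θ₁}[f₀; a] = μ_{θ₂}[f₀; a] for every a ∈ (0,B), then θ₁ = θ₂. (In other words, for the fixed uniform initial opinion density, the initial rates of change of the sub-threshold opinion fractions measured at all thresholds a ∈ (0,B) uniquely determine the interaction kernel.) -/

import Mathlib

open MeasureTheory Set

/-- The measurement bracket `Ψ_a(x₁,x₂) = 2·𝟙[(x₁+x₂)/2 ≤ a] − 𝟙[x₁ ≤ a] − 𝟙[x₂ ≤ a]`. -/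
noncomputable def Psi (a x₁ x₂ : ℝ) : ℝ :=
  2 * (if (x₁ + x₂) / 2 ≤ a then (1 : ℝ) else 0)
    - (if x₁ ≤ a then (1 : ℝ) else 0) - (if x₂ ≤ a then (1 : ℝ) else 0)

/-- The initial measurement rate `μ_θ[f₀; a]`. -/
noncomputable def mu (θ f₀ : ℝ → ℝ) (a : ℝ) : ℝ :=
  ∫ p : ℝ × ℝ, θ (p.1 - p.2) * f₀ p.1 * f₀ p.2 * Psi a p.1 p.2

/-- The uniform density on `(-B, B)`. -/
noncomputable def uniformDensity (B x : ℝ) : ℝ :=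
  (1 / (2 * B)) * (Set.Ioo (-B) B).indicator 1 x

open intervalIntegral

noncomputable def Tint (θ : ℝ → ℝ) (s : ℝ) : ℝ := ∫ x in (0:ℝ)..s, θ x
noncomputable def Uint (θ : ℝ → ℝ) (s : ℝ) : ℝ := ∫ x in (0:ℝ)..s, Tint θ x

variable {θ : ℝ → ℝ} {B : ℝ}

lemma Tint_cont (hc : Continuous θ) : Continuous (Tint θ) :=
  intervalIntegral.continuous_primitive (fun a b => hc.intervalIntegrable a b) 0

lemma Tint_odd (he : ∀ r, θ (-r) = θ r) (s : ℝ) : Tint θ (-s) = - Tint θ s := by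
  have h : ∫ x in (0:ℝ)..s, θ (-x) = ∫ x in (-s)..(0:ℝ), θ x := by
    simpa using intervalIntegral.integral_comp_neg (a := (0:ℝ)) (b := s) θ
  have h2 : ∫ x in (0:ℝ)..s, θ x = ∫ x in (-s)..(0:ℝ), θ x := by
    rw [← h]; exact intervalIntegral.integral_congr (fun x _ => (he x).symm)
  rw [Tint, Tint, h2, intervalIntegral.integral_symm]

lemma Uint_even (he : ∀ r, θ (-r) = θ r) (s : ℝ) : Uint θ (-s) = Uint θ s := by
  have h : ∫ x in (0:ℝ)..s, Tint θ (-x) = ∫ x in (-s)..(0:ℝ), Tint θ x := by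
    simpa using intervalIntegral.integral_comp_neg (a := (0:ℝ)) (b := s) (Tint θ)
  have h2 : ∫ x in (0:ℝ)..s, Tint θ (-x) = - Uint θ s := by
    rw [show (fun x => Tint θ (-x)) = fun x => - Tint θ x from funext (Tint_odd he)]
    · exact intervalIntegral.integral_neg
  rw [Uint, show -s = -s from rfl, ← neg_neg (∫ x in (0:ℝ)..(-s), Tint θ x)]
  rw [← intervalIntegral.integral_symm]
  rw [← h, h2, neg_neg]

lemma Tint_sat (hB : 0 < B) (hs : ∀ r, B ≤ |r| → θ r = 0) (hc : Continuous θ)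
    {s : ℝ} (hsB : B ≤ s) : Tint θ s = Tint θ B := by
  have : Tint θ s - Tint θ B = ∫ x in B..s, θ x :=
    intervalIntegral.integral_interval_sub_left (hc.intervalIntegrable 0 s) (hc.intervalIntegrable 0 B)
  have hz : (∫ x in B..s, θ x) = 0 := by
    rw [intervalIntegral.integral_congr (g := fun _ => (0:ℝ))]
    · simp
    · intro x hx
      rw [Set.uIcc_of_le hsB] at hx
      exact hs x (le_trans hx.1 (le_abs_self x))
  linarith [this, hz]


lemma integral_Ioc_shift (hc : Continuous θ) {l u : ℝ} (x : ℝ) (hlu : l ≤ u) :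
    ∫ y in Ioc l u, θ (x - y) = Tint θ (x - l) - Tint θ (x - u) := by
  rw [← intervalIntegral.integral_of_le hlu,
    intervalIntegral.integral_comp_sub_left θ x]
  exact (intervalIntegral.integral_interval_sub_left
    (hc.intervalIntegrable 0 (x - l)) (hc.intervalIntegrable 0 (x - u))).symm

lemma inner_eval (hB : 0 < B) (hc : Continuous θ) {a x : ℝ}
    (ha : a ∈ Ioo (0:ℝ) B) (hx : x ∈ Ioo (-B) B) :
    ∫ y in Ioo (-B) B, θ (x - y) * Psi a x y =
      2 * (Tint θ (x + B) - Tint θ (max (2*x - 2*a) (x - B)))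
      - (Tint θ (x + B) - Tint θ (x - a))
      - (if x ≤ a then (1:ℝ) else 0) * (Tint θ (x + B) - Tint θ (x - B)) := by
  obtain ⟨ha0, haB⟩ := ha
  obtain ⟨hx1, hx2⟩ := hx
  have key : ∀ y : ℝ, θ (x - y) * Psi a x y =
      2 * ((Iic (2*a - x)).indicator (fun y => θ (x - y)) y)
      - (Iic a).indicator (fun y => θ (x - y)) y
      - (if x ≤ a then (1:ℝ) else 0) * θ (x - y) := by
    intro y
    have hiff : (x + y) / 2 ≤ a ↔ y ≤ 2*a - x := by constructor <;> intro <;> linarith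
    simp only [Psi, Set.indicator_apply, Set.mem_Iic, hiff]
    split_ifs <;> ring
  rw [setIntegral_congr_fun measurableSet_Ioo (fun y _ => key y)]
  have hint : IntegrableOn (fun y => θ (x - y)) (Ioo (-B) B) :=
    ((hc.comp (continuous_const.sub continuous_id)).integrableOn_Icc (a := -B) (b := B)).mono_set
      Ioo_subset_Icc_self
  have hind : ∀ c : ℝ, IntegrableOn (fun y => (Iic c).indicator (fun y => θ (x - y)) y) (Ioo (-B) B) :=
    fun c => hint.indicator measurableSet_Iic
  have h1 : IntegrableOn (fun y => 2 * (Iic (2*a - x)).indicator (fun y => θ (x - y)) y) (Ioo (-B) B) :=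
    (hind _).const_mul 2
  have h12 : IntegrableOn (fun y => 2 * (Iic (2*a - x)).indicator (fun y => θ (x - y)) y
      - (Iic a).indicator (fun y => θ (x - y)) y) (Ioo (-B) B) := h1.sub (hind _)
  have h3 : IntegrableOn (fun y => (if x ≤ a then (1:ℝ) else 0) * θ (x - y)) (Ioo (-B) B) :=
    hint.const_mul _
  rw [integral_sub h12 h3, integral_sub h1 (hind _),
      MeasureTheory.integral_const_mul, MeasureTheory.integral_const_mul,
      setIntegral_indicator measurableSet_Iic, setIntegral_indicator measurableSet_Iic]
  have hIooIoc : ∫ y in Ioo (-B) B, θ (x - y) = Tint θ (x + B) - Tint θ (x - B) := by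
    rw [← integral_Ioc_eq_integral_Ioo, integral_Ioc_shift hc x (by linarith)]
    ring_nf
  have hCa : Ioo (-B) B ∩ Iic a = Ioc (-B) a := by
    ext y; simp only [mem_inter_iff, mem_Ioo, mem_Iic, mem_Ioc]
    constructor
    · rintro ⟨⟨h1, _⟩, h3⟩; exact ⟨h1, h3⟩
    · rintro ⟨h1, h2⟩; exact ⟨⟨h1, lt_of_le_of_lt h2 haB⟩, h2⟩
  have hC : ∫ y in Ioo (-B) B ∩ Iic a, θ (x - y) = Tint θ (x + B) - Tint θ (x - a) := by
    rw [hCa, integral_Ioc_shift hc x (by linarith)]; ring_nf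
  have hA : ∫ y in Ioo (-B) B ∩ Iic (2*a - x), θ (x - y)
      = Tint θ (x + B) - Tint θ (max (2*x - 2*a) (x - B)) := by
    by_cases hcB : B ≤ 2*a - x
    · have hmax : max (2*x - 2*a) (x - B) = x - B := max_eq_right (by linarith)
      have hset : Ioo (-B) B ∩ Iic (2*a - x) = Ioo (-B) B := by
        apply inter_eq_left.mpr
        intro y hy; exact le_trans (le_of_lt hy.2) hcB
      rw [hset, hmax, hIooIoc]
    · push_neg at hcB
      have hmax : max (2*x - 2*a) (x - B) = 2*x - 2*a := max_eq_left (by linarith)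
      have hset : Ioo (-B) B ∩ Iic (2*a - x) = Ioc (-B) (2*a - x) := by
        ext y; simp only [mem_inter_iff, mem_Ioo, mem_Iic, mem_Ioc]
        constructor
        · rintro ⟨⟨h1, _⟩, h3⟩; exact ⟨h1, h3⟩
        · rintro ⟨h1, h2⟩; exact ⟨⟨h1, lt_of_le_of_lt h2 hcB⟩, h2⟩
      rw [hset, hmax, integral_Ioc_shift hc x (by linarith)]
      ring_nf
  rw [hA, hC, hIooIoc]

lemma theta_bound (hB : 0 < B) (hc : Continuous θ) (hs : ∀ r, B ≤ |r| → θ r = 0) :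
    ∃ M : ℝ, ∀ r, |θ r| ≤ M := by
  obtain ⟨x₀, _, hx₀⟩ := isCompact_Icc.exists_isMaxOn (s := Icc (-B) B)
    (nonempty_Icc.mpr (by linarith)) (hc.abs.continuousOn)
  refine ⟨|θ x₀|, fun r => ?_⟩
  by_cases hr : r ∈ Icc (-B) B
  · exact hx₀ hr
  · have : θ r = 0 := by
      apply hs
      simp only [mem_Icc, not_and_or, not_le] at hr
      rcases hr with h | h
      · rw [abs_of_nonpos (by linarith)]; linarith
      · rw [abs_of_nonneg (by linarith)]; linarith
    rw [this, abs_zero]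
    exact abs_nonneg _

lemma psi_bound (a x y : ℝ) : |Psi a x y| ≤ 4 := by
  rw [Psi]
  rw [abs_le]
  constructor <;> { split_ifs <;> norm_num }

lemma mu_reduce (hB : 0 < B) (hc : Continuous θ) (hs : ∀ r, B ≤ |r| → θ r = 0) (a : ℝ) :
    mu θ (uniformDensity B) a
      = (1/(2*B))^2 * ∫ x in Ioo (-B) B, (∫ y in Ioo (-B) B, θ (x - y) * Psi a x y) := by
  obtain ⟨M, hM⟩ := theta_bound hB hc hs
  set c : ℝ := 1/(2*B) with hc_def
  have hcpos : 0 < c := by positivity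
  set G : ℝ × ℝ → ℝ :=
    fun p => θ (p.1 - p.2) * uniformDensity B p.1 * uniformDensity B p.2 * Psi a p.1 p.2 with hG
  have hmeasU : Measurable (uniformDensity B) := by
    apply Measurable.const_mul
    exact measurable_one.indicator measurableSet_Ioo
  have hPsiMeas : Measurable (fun p : ℝ × ℝ => Psi a p.1 p.2) := by
    unfold Psi
    apply Measurable.sub
    apply Measurable.sub
    · apply Measurable.const_mul
      exact Measurable.ite (measurableSet_le (by fun_prop) measurable_const)
        measurable_const measurable_const
    · exact Measurable.ite (measurableSet_le (by fun_prop) measurable_const)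
        measurable_const measurable_const
    · exact Measurable.ite (measurableSet_le (by fun_prop) measurable_const)
        measurable_const measurable_const
  have hGmeas : AEStronglyMeasurable G volume := by
    apply Measurable.aestronglyMeasurable
    exact ((((hc.measurable.comp (measurable_fst.sub measurable_snd)).mul
      (hmeasU.comp measurable_fst)).mul (hmeasU.comp measurable_snd)).mul hPsiMeas)
  set D : Set (ℝ × ℝ) := (Ioo (-B) B) ×ˢ (Ioo (-B) B) with hD
  have hbound : ∀ p : ℝ × ℝ, ‖G p‖ ≤ D.indicator (fun _ => M * c^2 * 4) p := by
    intro p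
    have hM0 : 0 ≤ M := le_trans (abs_nonneg _) (hM 0)
    by_cases hp : p ∈ D
    · rw [Set.indicator_of_mem hp]
      obtain ⟨hp1, hp2⟩ := hp
      have h1 : uniformDensity B p.1 = c := by
        rw [uniformDensity, Set.indicator_of_mem hp1]; simp [hc_def]
      have h2 : uniformDensity B p.2 = c := by
        rw [uniformDensity, Set.indicator_of_mem hp2]; simp [hc_def]
      rw [hG]
      simp only [Real.norm_eq_abs, h1, h2]
      calc |θ (p.1 - p.2) * c * c * Psi a p.1 p.2|
          = |θ (p.1 - p.2)| * c * c * |Psi a p.1 p.2| := by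
            rw [abs_mul, abs_mul, abs_mul, abs_of_pos hcpos]
        _ ≤ M * c * c * 4 := by
            apply mul_le_mul
            · apply mul_le_mul_of_nonneg_right
                (mul_le_mul_of_nonneg_right (hM _) hcpos.le) hcpos.le
            · exact psi_bound a p.1 p.2
            · exact abs_nonneg _
            · positivity
        _ = M * c^2 * 4 := by ring
    · rw [Set.indicator_of_notMem hp]
      have : uniformDensity B p.1 * uniformDensity B p.2 = 0 := by
        rw [hD, Set.mem_prod, not_and_or] at hp
        rcases hp with h | h
        · rw [uniformDensity, Set.indicator_of_notMem h]; ring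
        · rw [show uniformDensity B p.2 = (1/(2*B)) * (Set.Ioo (-B) B).indicator 1 p.2 from rfl,
            Set.indicator_of_notMem h]; ring
      rw [hG]
      simp only [Real.norm_eq_abs]
      rw [show θ (p.1 - p.2) * uniformDensity B p.1 * uniformDensity B p.2 * Psi a p.1 p.2
        = θ (p.1 - p.2) * (uniformDensity B p.1 * uniformDensity B p.2) * Psi a p.1 p.2 from by ring,
        this]
      simp
  have hDmeas : MeasurableSet D := measurableSet_Ioo.prod measurableSet_Ioo
  have hDfin : volume D < ⊤ := by
    rw [hD, show (volume : Measure (ℝ × ℝ)) = (volume : Measure ℝ).prod volume from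
      Measure.volume_eq_prod ℝ ℝ, Measure.prod_prod]
    exact ENNReal.mul_lt_top (by simp) (by simp)
  have hdom : Integrable (D.indicator (fun _ => M * c^2 * 4)) volume := by
    rw [integrable_indicator_iff hDmeas]
    exact integrableOn_const hDfin.ne
  have hGint : Integrable G volume := Integrable.mono' hdom hGmeas (ae_of_all _ hbound)
  have hGint' : Integrable G ((volume : Measure ℝ).prod volume) := by
    rwa [Measure.volume_eq_prod] at hGint
  rw [mu, show (fun p : ℝ × ℝ => θ (p.1 - p.2) * uniformDensity B p.1 * uniformDensity B p.2
      * Psi a p.1 p.2) = G from rfl]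
  rw [show (volume : Measure (ℝ × ℝ)) = (volume : Measure ℝ).prod volume from
    Measure.volume_eq_prod ℝ ℝ]
  rw [MeasureTheory.integral_prod G hGint']
  have hinner : ∀ x : ℝ, (∫ y, G (x, y)) =
      (c * c) * ((Ioo (-B) B).indicator
        (fun x' => ∫ y in Ioo (-B) B, θ (x' - y) * Psi a x' y) x) := by
    intro x
    by_cases hx : x ∈ Ioo (-B) B
    · rw [Set.indicator_of_mem hx]
      have hux : uniformDensity B x = c := by
        rw [uniformDensity, Set.indicator_of_mem hx, Pi.one_apply, mul_one]
      have : ∀ y, G (x, y) = (c * c) *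
          ((Ioo (-B) B).indicator (fun y => θ (x - y) * Psi a x y) y) := by
        intro y
        show θ (x - y) * uniformDensity B x * uniformDensity B y * Psi a x y = _
        rw [hux, uniformDensity]
        simp only [Set.indicator_apply, Pi.one_apply]
        split_ifs <;> ring
      rw [funext this, MeasureTheory.integral_const_mul, MeasureTheory.integral_indicator measurableSet_Ioo]
    · rw [Set.indicator_of_notMem hx]
      have hux : uniformDensity B x = 0 := by
        rw [uniformDensity, Set.indicator_of_notMem hx, mul_zero]
      have : ∀ y, G (x, y) = 0 := by
        intro y
        show θ (x - y) * uniformDensity B x * uniformDensity B y * Psi a x y = _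
        rw [hux]; ring
      rw [funext this]
      simp
  rw [funext hinner, MeasureTheory.integral_const_mul, MeasureTheory.integral_indicator measurableSet_Ioo, sq]

lemma mu_formula (hB : 0 < B) (hc : Continuous θ) (he : ∀ r, θ (-r) = θ r)
    (hs : ∀ r, B ≤ |r| → θ r = 0) {a : ℝ} (ha : a ∈ Ioo (0:ℝ) B) :
    mu θ (uniformDensity B) a = (1/(2*B))^2 *
      (2*Uint θ (2*B) - 2*Uint θ (2*B-2*a) + 2*Uint θ (B-a) - 2*Uint θ (B+a)) := by
  obtain ⟨ha0, haB⟩ := ha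
  have hT : Continuous (Tint θ) := Tint_cont hc
  set T := Tint θ
  set U := Uint θ with hU
  have hU0 : U 0 = 0 := intervalIntegral.integral_same
  have hUeven : ∀ s, U (-s) = U s := Uint_even he
  have Uab : ∀ c d : ℝ, (∫ x in c..d, T x) = U d - U c := fun c d =>
    (intervalIntegral.integral_interval_sub_left
      (hT.intervalIntegrable 0 d) (hT.intervalIntegrable 0 c)).symm
  rw [mu_reduce hB hc hs a]
  congr 1
  rw [setIntegral_congr_fun measurableSet_Ioo
      (fun x hx => inner_eval hB hc ⟨ha0, haB⟩ hx),
    ← integral_Ioc_eq_integral_Ioo, ← intervalIntegral.integral_of_le (by linarith : -B ≤ B)]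
  -- integrability of the pieces
  have hcont1 : Continuous (fun x : ℝ => T (x + B)) :=
    hT.comp (continuous_id.add continuous_const)
  have hcontmax : Continuous (fun x : ℝ => T (max (2*x - 2*a) (x - B))) :=
    hT.comp (((continuous_const.mul continuous_id).sub continuous_const).max
      (continuous_id.sub continuous_const))
  have hcontE1 : Continuous (fun x : ℝ => 2 * (T (x + B) - T (max (2*x - 2*a) (x - B)))) :=
    continuous_const.mul (hcont1.sub hcontmax)
  have hcont2 : Continuous (fun x : ℝ => T (x - a)) :=
    hT.comp (continuous_id.sub continuous_const)
  have hcont3 : Continuous (fun x : ℝ => T (x - B)) :=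
    hT.comp (continuous_id.sub continuous_const)
  have hcontE2 : Continuous (fun x : ℝ => T (x + B) - T (x - a)) := hcont1.sub hcont2
  have hcontg : Continuous (fun x : ℝ => T (x + B) - T (x - B)) := hcont1.sub hcont3
  have hE3eq : (fun x : ℝ => (if x ≤ a then (1:ℝ) else 0) * (T (x + B) - T (x - B)))
      = fun x => (Iic a).indicator (fun x => T (x + B) - T (x - B)) x := by
    funext x
    simp only [Set.indicator_apply, mem_Iic]
    split_ifs <;> ring
  have hintE3 : ∀ l u : ℝ, IntervalIntegrable
      (fun x : ℝ => (if x ≤ a then (1:ℝ) else 0) * (T (x + B) - T (x - B))) volume l u := by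
    intro l u
    rw [hE3eq]
    exact ⟨((hcontg.intervalIntegrable l u).1).indicator measurableSet_Iic,
      ((hcontg.intervalIntegrable l u).2).indicator measurableSet_Iic⟩
  -- split the integral into three pieces
  rw [intervalIntegral.integral_sub
      (((hcontE1.intervalIntegrable _ _).sub (hcontE2.intervalIntegrable _ _))) (hintE3 _ _),
    intervalIntegral.integral_sub (hcontE1.intervalIntegrable _ _) (hcontE2.intervalIntegrable _ _),
    intervalIntegral.integral_const_mul,
    intervalIntegral.integral_sub (hcont1.intervalIntegrable _ _) (hcontmax.intervalIntegrable _ _),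
    intervalIntegral.integral_sub (hcont1.intervalIntegrable _ _)
      (hcont2.intervalIntegrable _ _)]
  -- piece: ∫ T (x + B)
  have hP1 : (∫ x in (-B)..B, T (x + B)) = U (2*B) := by
    rw [intervalIntegral.integral_comp_add_right T B, show -B + B = (0:ℝ) by ring,
      show B + B = 2*B by ring, Uab, hU0, sub_zero]
  -- piece: ∫ T (x - a)
  have hP2 : (∫ x in (-B)..B, T (x - a)) = U (B - a) - U (B + a) := by
    rw [intervalIntegral.integral_comp_sub_right T a, Uab,
      show -B - a = -(B + a) by ring, hUeven]
  -- piece: max term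
  have hPmax : (∫ x in (-B)..B, T (max (2*x - 2*a) (x - B))) = U (2*B - 2*a) - U (2*B) := by
    have hadj := intervalIntegral.integral_add_adjacent_intervals
      (μ := volume) (a := -B) (b := 2*a - B) (c := B)
      (hcontmax.intervalIntegrable _ _) (hcontmax.intervalIntegrable _ _)
    have hp1 : (∫ x in (-B)..(2*a - B), T (max (2*x - 2*a) (x - B)))
        = U (2*a - 2*B) - U (-(2*B)) := by
      rw [intervalIntegral.integral_congr (g := fun x => T (x - B))
        (fun x hx => by
          rw [Set.uIcc_of_le (by linarith : -B ≤ 2*a - B), mem_Icc] at hx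
          have : max (2*x - 2*a) (x - B) = x - B := max_eq_right (by linarith [hx.2])
          rw [this]),
        intervalIntegral.integral_comp_sub_right T B, Uab,
        show -B - B = -(2*B) by ring, show 2*a - B - B = 2*a - 2*B by ring]
    have hp2 : (∫ x in (2*a - B)..B, T (max (2*x - 2*a) (x - B)))
        = (2:ℝ)⁻¹ * (U (2*B - 2*a) - U (2*a - 2*B)) := by
      rw [intervalIntegral.integral_congr (g := fun x => T (2*x - 2*a))
        (fun x hx => by
          rw [Set.uIcc_of_le (by linarith : 2*a - B ≤ B), mem_Icc] at hx
          have : max (2*x - 2*a) (x - B) = 2*x - 2*a := max_eq_left (by linarith [hx.1])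
          rw [this]),
        intervalIntegral.integral_comp_mul_sub T (two_ne_zero) (2*a),
        show 2*(2*a - B) - 2*a = 2*a - 2*B by ring, show 2*B - 2*a = 2*B - 2*a from rfl, Uab]
      simp [smul_eq_mul]
    rw [← hadj, hp1, hp2, show 2*a - 2*B = -(2*B - 2*a) by ring, hUeven, hUeven]
    ring
  -- piece: indicator term
  have hP3 : (∫ x in (-B)..B, (if x ≤ a then (1:ℝ) else 0) * (T (x + B) - T (x - B)))
      = U (a + B) - U (B - a) + U (2*B) := by
    have hadj := intervalIntegral.integral_add_adjacent_intervals
      (μ := volume) (a := -B) (b := a) (c := B) (hintE3 _ _) (hintE3 _ _)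
    have hp1 : (∫ x in (-B)..a, (if x ≤ a then (1:ℝ) else 0) * (T (x + B) - T (x - B)))
        = U (a + B) - U (B - a) + U (2*B) := by
      rw [intervalIntegral.integral_congr (g := fun x => T (x + B) - T (x - B))
        (fun x hx => by
          rw [Set.uIcc_of_le (by linarith : -B ≤ a), mem_Icc] at hx
          simp [hx.2]),
        intervalIntegral.integral_sub (hcont1.intervalIntegrable _ _)
          (hcont3.intervalIntegrable _ _),
        intervalIntegral.integral_comp_add_right T B, intervalIntegral.integral_comp_sub_right T B,
        show -B + B = (0:ℝ) by ring, Uab, Uab, hU0,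
        show -B - B = -(2*B) by ring, show a - B = -(B - a) by ring,
        hUeven, hUeven]
      ring
    have hp2 : (∫ x in a..B, (if x ≤ a then (1:ℝ) else 0) * (T (x + B) - T (x - B))) = 0 := by
      rw [intervalIntegral.integral_of_le haB.le,
        setIntegral_congr_fun (g := fun _ => (0:ℝ)) measurableSet_Ioc
          (fun x hx => by
            have : ¬ x ≤ a := not_le.mpr hx.1
            simp [this])]
      simp
    rw [← hadj, hp1, hp2, add_zero]
  rw [hP1, hP2, hPmax, hP3]
  ring_nf

lemma Tint_hasDeriv (hc : Continuous θ) (s : ℝ) : HasDerivAt (Tint θ) (θ s) s :=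
  intervalIntegral.integral_hasDerivAt_right (hc.intervalIntegrable 0 s)
    hc.stronglyMeasurable.stronglyMeasurableAtFilter hc.continuousAt

lemma Uint_hasDeriv (hc : Continuous θ) (s : ℝ) : HasDerivAt (Uint θ) (Tint θ s) s :=
  intervalIntegral.integral_hasDerivAt_right ((Tint_cont hc).intervalIntegrable 0 s)
    (Tint_cont hc).stronglyMeasurable.stronglyMeasurableAtFilter (Tint_cont hc).continuousAt

lemma E_hasDeriv (hc : Continuous θ) (B a : ℝ) :
    HasDerivAt (fun a => 2*Uint θ (2*B) - 2*Uint θ (2*B-2*a) + 2*Uint θ (B-a) - 2*Uint θ (B+a))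
      (4*Tint θ (2*B-2*a) - 2*Tint θ (B-a) - 2*Tint θ (B+a)) a := by
  have h1 : HasDerivAt (fun a : ℝ => 2*B - 2*a) (-2) a := by
    simpa using ((hasDerivAt_id' a).const_mul 2).const_sub (2*B)
  have h2 : HasDerivAt (fun a : ℝ => B - a) (-1) a := by
    simpa using (hasDerivAt_id' a).const_sub B
  have h3 : HasDerivAt (fun a : ℝ => B + a) 1 a := by
    simpa using (hasDerivAt_id' a).const_add B
  have d1 := ((Uint_hasDeriv hc (2*B - 2*a)).comp a h1).const_mul 2
  have d2 := ((Uint_hasDeriv hc (B - a)).comp a h2).const_mul 2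
  have d3 := ((Uint_hasDeriv hc (B + a)).comp a h3).const_mul 2
  have := (((hasDerivAt_const a (2*Uint θ (2*B))).sub d1).add d2).sub d3
  exact this.congr_deriv (by ring)

theorem stmt10 (B : ℝ) (hB : 0 < B) (θ₁ θ₂ : ℝ → ℝ)
    (hθ₁c : Continuous θ₁) (hθ₁nn : ∀ r, 0 ≤ θ₁ r) (hθ₁e : ∀ r, θ₁ (-r) = θ₁ r)
    (hθ₁supp : ∀ r : ℝ, B ≤ |r| → θ₁ r = 0)
    (hθ₂c : Continuous θ₂) (hθ₂nn : ∀ r, 0 ≤ θ₂ r) (hθ₂e : ∀ r, θ₂ (-r) = θ₂ r)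
    (hθ₂supp : ∀ r : ℝ, B ≤ |r| → θ₂ r = 0)
    (hdata : ∀ a ∈ Set.Ioo (0:ℝ) B,
      mu θ₁ (uniformDensity B) a = mu θ₂ (uniformDensity B) a) :
    θ₁ = θ₂ := by
  set E₁ : ℝ → ℝ := fun a => 2*Uint θ₁ (2*B) - 2*Uint θ₁ (2*B-2*a)
    + 2*Uint θ₁ (B-a) - 2*Uint θ₁ (B+a) with hE₁
  set E₂ : ℝ → ℝ := fun a => 2*Uint θ₂ (2*B) - 2*Uint θ₂ (2*B-2*a)
    + 2*Uint θ₂ (B-a) - 2*Uint θ₂ (B+a) with hE₂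
  -- Step 1: E₁ = E₂ on Ioo 0 B
  have hE : ∀ a ∈ Ioo (0:ℝ) B, E₁ a = E₂ a := by
    intro a ha
    have h := hdata a ha
    rw [mu_formula hB hθ₁c hθ₁e hθ₁supp ha, mu_formula hB hθ₂c hθ₂e hθ₂supp ha] at h
    have hne : ((1:ℝ)/(2*B))^2 ≠ 0 := by positivity
    exact mul_left_cancel₀ hne h
  -- Step 2: derivative equality on Ioo 0 B
  have hD : ∀ a ∈ Ioo (0:ℝ) B,
      4*(Tint θ₁) (2*B-2*a) - 2*(Tint θ₁) (B-a) - 2*(Tint θ₁) (B+a)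
        = 4*(Tint θ₂) (2*B-2*a) - 2*(Tint θ₂) (B-a) - 2*(Tint θ₂) (B+a) := by
    intro a ha
    have hd₁ := E_hasDeriv hθ₁c B a
    have hd₂ := E_hasDeriv hθ₂c B a
    rw [← hE₁] at hd₁
    rw [← hE₂] at hd₂
    have hev : E₂ =ᶠ[nhds a] E₁ := by
      filter_upwards [Ioo_mem_nhds ha.1 ha.2] with x hx
      exact (hE x hx).symm
    exact (hd₁.congr_of_eventuallyEq hev).unique hd₂
  -- Step 3: functional equation for Θ
  set Θ : ℝ → ℝ := fun t => ((Tint θ₁) B - (Tint θ₁) t) - ((Tint θ₂) B - (Tint θ₂) t) with hΘ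
  have hsat : ∀ t, B ≤ t → Θ t = 0 := by
    intro t ht
    simp only [hΘ, Tint_sat hB hθ₁supp hθ₁c ht, Tint_sat hB hθ₂supp hθ₂c ht, sub_self]
  have hfe : ∀ t ∈ Ioo (0:ℝ) B, Θ t = 2 * Θ (2*t) := by
    intro t ht
    have haB : (B - t) ∈ Ioo (0:ℝ) B := ⟨by linarith [ht.2], by linarith [ht.1]⟩
    have h := hD (B - t) haB
    have e1 : 2*B - 2*(B - t) = 2*t := by ring
    have e2 : B - (B - t) = t := by ring
    rw [e1, e2] at h
    have hs₁ : (Tint θ₁) (B + (B - t)) = (Tint θ₁) B := Tint_sat hB hθ₁supp hθ₁c (by linarith [ht.2])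
    have hs₂ : (Tint θ₂) (B + (B - t)) = (Tint θ₂) B := Tint_sat hB hθ₂supp hθ₂c (by linarith [ht.2])
    rw [hs₁, hs₂] at h
    simp only [hΘ]
    linarith
  -- Step 4: Θ = 0 on (0, ∞)
  have hkey : ∀ n : ℕ, ∀ t : ℝ, 0 < t → B ≤ 2^n * t → Θ t = 0 := by
    intro n
    induction n with
    | zero => intro t _ ht; exact hsat t (by simpa using ht)
    | succ n ih =>
      intro t ht0 hle
      by_cases htB : B ≤ t
      · exact hsat t htB
      · have : Θ t = 2 * Θ (2*t) := hfe t ⟨ht0, not_le.mp htB⟩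
        rw [this, ih (2*t) (by linarith) (by rw [← mul_assoc, ← pow_succ]; exact hle), mul_zero]
  have hΘ0 : ∀ t : ℝ, 0 < t → Θ t = 0 := by
    intro t ht0
    obtain ⟨n, hn⟩ := pow_unbounded_of_one_lt (B / t) (one_lt_two (α := ℝ))
    exact hkey n t ht0 (by rw [div_lt_iff₀ ht0] at hn; nlinarith)
  -- Step 5: g = θ₁ - θ₂ vanishes on (0, ∞)
  set g : ℝ → ℝ := fun r => θ₁ r - θ₂ r with hg
  have hgc : Continuous g := hθ₁c.sub hθ₂c
  set W : ℝ → ℝ := fun t => (Tint θ₁) t - (Tint θ₂) t with hW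
  have hWd : ∀ t : ℝ, HasDerivAt W (g t) t :=
    fun t => (Tint_hasDeriv hθ₁c t).sub (Tint_hasDeriv hθ₂c t)
  have hWconst : ∀ t : ℝ, 0 < t → W t = (Tint θ₁) B - (Tint θ₂) B := by
    intro t ht
    have := hΘ0 t ht
    simp only [hΘ] at this
    simp only [hW]
    linarith
  have hgpos : ∀ t : ℝ, 0 < t → g t = 0 := by
    intro t ht
    have hev : (fun _ : ℝ => (Tint θ₁) B - (Tint θ₂) B) =ᶠ[nhds t] W := by
      filter_upwards [Ioi_mem_nhds ht] with x hx
      exact (hWconst x hx).symm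
    have h1 : HasDerivAt (fun _ : ℝ => (Tint θ₁) B - (Tint θ₂) B) (g t) t :=
      (hWd t).congr_of_eventuallyEq hev
    exact (h1.unique (hasDerivAt_const t _))
  -- Step 6: conclude
  have hgzero : g = fun _ => 0 := by
    apply Continuous.ext_on (dense_compl_singleton (0:ℝ)) hgc continuous_const
    intro x hx
    have hx0 : x ≠ 0 := hx
    rcases lt_trichotomy x 0 with h | h | h
    · have : g (-x) = 0 := hgpos (-x) (by linarith)
      simpa [hg, hθ₁e, hθ₂e] using this
    · exact absurd h hx0
    · exact hgpos x h
  funext x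
  have := congrFun hgzero x
  simp only [hg] at this
  linarith
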